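/- arXiv:1504.03868 — 4 statements merged into one kernel-verified Lean document; each statement's English description precedes it below -/
import Mathlib

section
/- Carlson's theorem: Let f be holomorphic on an open subset of ℂ containing the closed right half-plane {z ∈ ℂ : Re z ≥ 0}, and suppose there exist constants C > 0 and 0 ≤ c < π such that |f(z)| ≤ C·e^{c|z|} for all z with Re z ≥ 0. If f(n) = 0 for every nonnegative integer n, then f(z) = 0 for all z with Re z > 0. -/
open Complex Set Filter Asymptotics Metric Bornology
open scoped Real Topology Classical

set_option maxHeartbeats 1000000

noncomputable section CarlsonAux
namespace CarlsonAux

lemma sq_abs_sin (z : ℂ) :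
    ‖Complex.sin z‖ ^ 2 = Real.sin z.re ^ 2 + Real.sinh z.im ^ 2 := by
  have h : Complex.sin z = ((Real.sin z.re * Real.cosh z.im : ℝ) : ℂ)
      + ((Real.cos z.re * Real.sinh z.im : ℝ) : ℂ) * Complex.I := by
    rw [Complex.sin_eq]; push_cast; ring
  rw [h, Complex.sq_norm, Complex.normSq_add_mul_I]
  nlinarith [Real.sin_sq_add_cos_sq z.re, Real.cosh_sq z.im]

private lemma le_of_sq_le_sq {a b : ℝ} (hb : 0 ≤ b) (h : a ^ 2 ≤ b ^ 2) : |a| ≤ b := by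
  nlinarith [abs_nonneg a, _root_.sq_abs a]

lemma sinh_le_abs_sin (z : ℂ) : |Real.sinh z.im| ≤ ‖Complex.sin z‖ := by
  refine le_of_sq_le_sq (by positivity) ?_
  rw [sq_abs_sin]; nlinarith [sq_nonneg (Real.sin z.re)]

lemma sin_re_le_abs_sin (z : ℂ) : |Real.sin z.re| ≤ ‖Complex.sin z‖ := by
  refine le_of_sq_le_sq (by positivity) ?_
  rw [sq_abs_sin]; nlinarith [sq_nonneg (Real.sinh z.im)]

/-- key lower bound for `|sin (π z)|`. -/
lemma half_le_abs_sin_pi {z : ℂ}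
    (h : 4⁻¹ ≤ |z.im| ∨ ∀ k : ℤ, 6⁻¹ ≤ |z.re - k|) :
    2⁻¹ ≤ ‖Complex.sin (Real.pi * z)‖ := by
  have him : (Real.pi * z : ℂ).im = Real.pi * z.im := by simp
  have hre : (Real.pi * z : ℂ).re = Real.pi * z.re := by simp
  rcases h with h | h
  · refine le_trans ?_ (sinh_le_abs_sin _)
    rw [him, Real.abs_sinh, abs_mul, abs_of_pos Real.pi_pos]
    have h1 : (2:ℝ)⁻¹ ≤ Real.pi * 4⁻¹ := by nlinarith [Real.pi_gt_three]
    refine h1.trans ?_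
    calc Real.pi * 4⁻¹ ≤ Real.pi * |z.im| := by
          gcongr
      _ ≤ Real.sinh (Real.pi * |z.im|) := by
          rcases eq_or_lt_of_le (mul_nonneg Real.pi_pos.le (abs_nonneg z.im)) with h0 | h0
          · rw [← h0, Real.sinh_zero]
          · exact (Real.self_lt_sinh_iff.2 h0).le
  · refine le_trans ?_ (sin_re_le_abs_sin _)
    rw [hre]
    set k : ℤ := round z.re with hk
    set t : ℝ := z.re - k with ht
    have h1 : |t| ≤ 2⁻¹ := by simpa [ht] using abs_sub_round z.re
    have h2 : 6⁻¹ ≤ |t| := h k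
    have h3 : Real.pi * z.re = Real.pi * t + k * Real.pi := by rw [ht]; push_cast; ring
    rw [h3, Real.sin_add_int_mul_pi]
    have habs : |(-1:ℝ) ^ k * Real.sin (Real.pi * t)| = |Real.sin (Real.pi * t)| := by
      have h0 : |(-1:ℝ) ^ k| = 1 := by
        rcases Int.even_or_odd k with hk2 | hk2
        · rw [hk2.neg_one_zpow]; exact abs_one
        · rw [hk2.neg_one_zpow]; norm_num
      rw [abs_mul, h0, one_mul]
    rw [habs]
    have h4 : |Real.sin (Real.pi * t)| = Real.sin (Real.pi * |t|) := by
      rcases abs_cases t with ⟨he, hpos⟩ | ⟨he, hneg⟩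
      · rw [he]
        refine _root_.abs_of_nonneg (Real.sin_nonneg_of_nonneg_of_le_pi (by positivity) ?_)
        nlinarith [Real.pi_pos]
      · rw [he, mul_neg, Real.sin_neg]
        have hsin : 0 ≤ Real.sin (Real.pi * (-t)) := by
          apply Real.sin_nonneg_of_nonneg_of_le_pi
          · nlinarith [Real.pi_pos]
          · nlinarith [Real.pi_pos, abs_nonneg t]
        rw [mul_neg, Real.sin_neg] at hsin
        exact _root_.abs_of_nonpos (by linarith) |>.trans (by ring)
    rw [h4]
    have h5 : (2:ℝ)⁻¹ = Real.sin (Real.pi / 6) := by rw [Real.sin_pi_div_six]; norm_num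
    rw [h5]
    have h6 : Real.pi / 6 ≤ Real.pi * |t| := by nlinarith [Real.pi_pos]
    apply Real.sin_le_sin_of_le_of_le_pi_div_two _ _ h6
    · nlinarith [Real.pi_pos]
    · nlinarith [Real.pi_pos]


/-! ### The extension of `f z / sin (π z)` -/

def qext (f : ℂ → ℂ) : ℂ → ℂ := fun z =>
  if ∃ n : ℕ, z = (n : ℂ) then deriv f z / (Real.pi * Complex.cos (Real.pi * z))
  else f z / Complex.sin (Real.pi * z)

lemma sin_pi_nat (n : ℕ) : Complex.sin ((Real.pi : ℂ) * n) = 0 := by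
  rw [Complex.sin_eq_zero_iff]
  exact ⟨n, by push_cast; ring⟩

lemma qext_of_sin_ne {f : ℂ → ℂ} {z : ℂ} (h : Complex.sin (Real.pi * z) ≠ 0) :
    qext f z = f z / Complex.sin (Real.pi * z) := by
  rw [qext, if_neg]
  rintro ⟨n, rfl⟩
  exact h (sin_pi_nat n)

lemma natural_of_sin_eq {z : ℂ} (h : Complex.sin ((Real.pi : ℂ) * z) = 0)
    (hre : -2⁻¹ < z.re) : ∃ n : ℕ, z = (n : ℂ) := by
  rw [Complex.sin_eq_zero_iff] at h
  obtain ⟨k, hk⟩ := h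
  have hπ : ((Real.pi : ℂ)) ≠ 0 := Complex.ofReal_ne_zero.2 Real.pi_ne_zero
  have hz : z = (k : ℂ) := by
    apply mul_left_cancel₀ hπ
    rw [hk]; ring
  have hk0 : 0 ≤ k := by
    by_contra hneg
    push_neg at hneg
    have : z.re = (k : ℝ) := by rw [hz]; simp
    rw [this] at hre
    have : (k : ℝ) ≤ -1 := by exact_mod_cast (by omega : k ≤ -1)
    norm_num at hre
    linarith
  exact ⟨k.toNat, by rw [hz]; congr 1; omega⟩

lemma nat_eq_of_abs_lt {m n : ℕ} (h : ‖(m : ℂ) - (n : ℂ)‖ < 1) : m = n := by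
  by_contra hmn
  have h1 : ((m : ℂ) - (n : ℂ)) = (((m : ℤ) - (n : ℤ) : ℤ) : ℂ) := by push_cast; ring
  rw [h1] at h
  have h3 : (1 : ℤ) ≤ |(m : ℤ) - (n : ℤ)| := Int.one_le_abs (by
    intro h0
    exact hmn (by omega))
  have h2 : (1 : ℝ) ≤ ‖(((m : ℤ) - (n : ℤ) : ℤ) : ℂ)‖ := by
    rw [Complex.norm_intCast]
    exact_mod_cast h3
  linarith

lemma sin_pi_mul_differentiable : Differentiable ℂ (fun w : ℂ => Complex.sin (Real.pi * w)) :=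
  fun _ => (Complex.differentiable_sin _).comp _ ((differentiable_id.const_mul _) _)

lemma deriv_sin_pi_mul (a : ℂ) :
    deriv (fun w : ℂ => Complex.sin (Real.pi * w)) a = Real.pi * Complex.cos (Real.pi * a) := by
  have h1 : HasDerivAt (fun w : ℂ => Complex.sin (Real.pi * w))
      (Complex.cos ((Real.pi : ℂ) * a) * Real.pi) a := by
    have h2 : HasDerivAt (fun w : ℂ => (Real.pi : ℂ) * w) (Real.pi : ℂ) a := by
      simpa using (hasDerivAt_id a).const_mul (Real.pi : ℂ)
    exact (Complex.hasDerivAt_sin ((Real.pi : ℂ) * a)).comp a h2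
  rw [h1.deriv]; ring

lemma qext_differentiableAt {f : ℂ → ℂ} {U : Set ℂ} (hU : IsOpen U)
    (hf : DifferentiableOn ℂ f U) (hzero : ∀ n : ℕ, f (n : ℂ) = 0)
    {z₀ : ℂ} (hz₀ : z₀ ∈ U) (hre : -2⁻¹ < z₀.re) :
    DifferentiableAt ℂ (qext f) z₀ := by
  by_cases hs : Complex.sin ((Real.pi : ℂ) * z₀) = 0
  · obtain ⟨n, rfl⟩ := natural_of_sin_eq hs hre
    set F := dslope f (n : ℂ) with hF
    set G := dslope (fun w : ℂ => Complex.sin (Real.pi * w)) (n : ℂ) with hG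
    have hmem : U ∈ 𝓝 ((n : ℕ) : ℂ) := hU.mem_nhds hz₀
    have hFd : DifferentiableAt ℂ F (n : ℂ) :=
      ((Complex.differentiableOn_dslope hmem).2 hf).differentiableAt hmem
    have hGd : DifferentiableAt ℂ G (n : ℂ) :=
      ((Complex.differentiableOn_dslope (univ_mem)).2
        sin_pi_mul_differentiable.differentiableOn).differentiableAt univ_mem
    have hGn : G (n : ℂ) ≠ 0 := by
      rw [hG, dslope_same, deriv_sin_pi_mul]
      have hcos : Complex.cos ((Real.pi : ℂ) * n) ≠ 0 := by
        intro h0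
        have := Complex.sin_sq_add_cos_sq ((Real.pi : ℂ) * n)
        rw [h0, sin_pi_nat n] at this
        norm_num at this
      exact mul_ne_zero (by exact_mod_cast Real.pi_ne_zero) hcos
    have hH : DifferentiableAt ℂ (fun z => F z / G z) (n : ℂ) := hFd.div hGd hGn
    have heq : qext f =ᶠ[𝓝 ((n : ℕ) : ℂ)] fun z => F z / G z := by
      filter_upwards [Metric.ball_mem_nhds ((n : ℕ) : ℂ) one_half_pos] with z hz
      by_cases hzn : z = (n : ℂ)
      · subst hzn
        rw [qext, if_pos ⟨n, rfl⟩, hF, hG, dslope_same, dslope_same, deriv_sin_pi_mul]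
      · have hzre : -2⁻¹ < z.re := by
          have h1 : |z.re - (n : ℝ)| ≤ ‖z - (n : ℂ)‖ := by
            have := Complex.abs_re_le_norm (z - (n : ℂ))
            simpa using this
          have h2 : ‖z - (n : ℂ)‖ < 1 / 2 := by
            rw [← Complex.dist_eq]; exact hz
          have h3 : (0 : ℝ) ≤ (n : ℝ) := Nat.cast_nonneg n
          have := abs_lt.1 (lt_of_le_of_lt h1 h2)
          have := this.1
          norm_num at this ⊢
          linarith
        have hzsin : Complex.sin ((Real.pi : ℂ) * z) ≠ 0 := by
          intro h0
          obtain ⟨m, rfl⟩ := natural_of_sin_eq h0 hzre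
          have h2 : ‖(m : ℂ) - (n : ℂ)‖ < 1 := by
            rw [← Complex.dist_eq]
            calc dist (m : ℂ) (n : ℂ) < 1 / 2 := hz
              _ < 1 := by norm_num
          exact hzn (by rw [nat_eq_of_abs_lt h2])
        rw [qext_of_sin_ne hzsin, hF, hG, dslope_of_ne f hzn, dslope_of_ne _ hzn,
          slope_def_field, slope_def_field, hzero n, sin_pi_nat n, sub_zero, sub_zero]
        have hzn' : z - (n : ℂ) ≠ 0 := sub_ne_zero.2 hzn
        field_simp
    exact hH.congr_of_eventuallyEq heq
  · have heq : qext f =ᶠ[𝓝 z₀] fun z => f z / Complex.sin (Real.pi * z) := by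
      have hopen : IsOpen {z : ℂ | Complex.sin ((Real.pi : ℂ) * z) ≠ 0} :=
        isOpen_ne_fun (by fun_prop) continuous_const
      filter_upwards [hopen.mem_nhds hs] with z hz using qext_of_sin_ne hz
    have hdiv : DifferentiableAt ℂ (fun z => f z / Complex.sin (Real.pi * z)) z₀ :=
      (hf.differentiableAt (hU.mem_nhds hz₀)).div (sin_pi_mul_differentiable z₀) hs
    exact hdiv.congr_of_eventuallyEq heq


lemma qext_bound {f : ℂ → ℂ} {U : Set ℂ} (hU : IsOpen U)
    (hUsub : {z : ℂ | 0 ≤ z.re} ⊆ U) (hf : DifferentiableOn ℂ f U)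
    {C c : ℝ} (hC : 0 < C) (hc0 : 0 ≤ c)
    (hbound : ∀ z : ℂ, 0 ≤ z.re → ‖f z‖ ≤ C * Real.exp (c * ‖z‖))
    (hzero : ∀ n : ℕ, f (n : ℂ) = 0) :
    ∃ A : ℝ, 0 < A ∧ ∀ z : ℂ, 0 ≤ z.re →
      ‖qext f z‖ ≤ A * Real.exp (c * ‖z‖) := by
  have hdiffAt : ∀ z : ℂ, 0 ≤ z.re → DifferentiableAt ℂ (qext f) z := fun z hz =>
    qext_differentiableAt hU hf hzero (hUsub hz) (by norm_num; linarith)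
  -- bound on the compact part
  set K : Set ℂ := Metric.closedBall 0 2 ∩ {z : ℂ | 0 ≤ z.re} with hK
  have hKcomp : IsCompact K :=
    (isCompact_closedBall 0 2).inter_right (isClosed_le continuous_const Complex.continuous_re)
  have hKcont : ContinuousOn (qext f) K := fun z hz =>
    ((hdiffAt z hz.2).continuousAt).continuousWithinAt
  obtain ⟨A₀, hA₀⟩ := hKcomp.exists_bound_of_continuousOn hKcont
  set A : ℝ := max A₀ (2 * C * Real.exp c) with hA
  have hApos : 0 < A := lt_of_lt_of_le (by positivity) (le_max_right _ _)
  refine ⟨A, hApos, fun z hz => ?_⟩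
  have hexp1 : (1 : ℝ) ≤ Real.exp (c * ‖z‖) :=
    Real.one_le_exp (by positivity)
  by_cases hsin : 2⁻¹ ≤ ‖Complex.sin ((Real.pi : ℂ) * z)‖
  · have hne : Complex.sin ((Real.pi : ℂ) * z) ≠ 0 := by
      intro h0; rw [h0] at hsin; norm_num at hsin
    rw [qext_of_sin_ne hne, norm_div]
    calc ‖f z‖ / ‖Complex.sin ((Real.pi : ℂ) * z)‖
        ≤ (C * Real.exp (c * ‖z‖)) / 2⁻¹ := by
          apply div_le_div₀ (by positivity) (hbound z hz) (by norm_num) hsin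
      _ = 2 * C * Real.exp (c * ‖z‖) := by ring
      _ ≤ A * Real.exp (c * ‖z‖) := by
          have h1 : (2 : ℝ) * C ≤ A := by
            have h2 : (2:ℝ) * C ≤ 2 * C * Real.exp c := by nlinarith [Real.one_le_exp hc0]
            exact h2.trans (le_max_right _ _)
          exact mul_le_mul_of_nonneg_right h1 (Real.exp_pos _).le
  · push_neg at hsin
    by_cases hz2 : ‖z‖ ≤ 2
    · have hzK : z ∈ K := ⟨by simpa [Metric.mem_closedBall, Complex.dist_eq] using hz2, hz⟩
      calc ‖qext f z‖ = ‖qext f z‖ := rfl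
        _ ≤ A₀ := hA₀ z hzK
        _ ≤ A₀ * Real.exp (c * ‖z‖) := by
            have hA0nn : 0 ≤ A₀ := (norm_nonneg _).trans (hA₀ z hzK)
            nlinarith [hexp1]
        _ ≤ A * Real.exp (c * ‖z‖) :=
            mul_le_mul_of_nonneg_right (le_max_left _ _) (Real.exp_pos _).le
    · push_neg at hz2
      -- localize near an integer
      have hnot : ¬ (4⁻¹ ≤ |z.im| ∨ ∀ k : ℤ, 6⁻¹ ≤ |z.re - k|) := by
        intro hcon
        exact absurd (half_le_abs_sin_pi hcon) (not_le.2 hsin)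
      push_neg at hnot
      obtain ⟨him, k, hkre⟩ := hnot
      have hre_big : (7:ℝ)/4 < z.re := by
        have h1 : ‖z‖ ≤ |z.re| + |z.im| := Complex.norm_le_abs_re_add_abs_im z
        have h2 : |z.re| = z.re := abs_of_nonneg hz
        linarith
      have hk2 : (2 : ℤ) ≤ k := by
        have h1 : (z.re : ℝ) - k < 6⁻¹ := (abs_lt.1 hkre).2
        have h2 : -(6⁻¹:ℝ) < z.re - k := (abs_lt.1 hkre).1
        have : (1 : ℝ) < (k : ℝ) := by linarith
        exact_mod_cast by
          have : (1 : ℝ) < (k : ℝ) := this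
          exact_mod_cast this
      have hkR : (2 : ℝ) ≤ (k : ℝ) := by exact_mod_cast hk2
      -- max modulus on the ball around k
      set S : Set ℂ := Metric.ball ((k : ℤ) : ℂ) (3/4) with hS
      have hSre : ∀ w ∈ Metric.closedBall ((k : ℤ) : ℂ) (3/4), (1:ℝ) ≤ w.re := by
        intro w hw
        rw [Metric.mem_closedBall, Complex.dist_eq] at hw
        have h1 : |(w - ((k : ℤ) : ℂ)).re| ≤ ‖w - ((k:ℤ):ℂ)‖ :=
          Complex.abs_re_le_norm _
        have h2 : (w - ((k : ℤ) : ℂ)).re = w.re - (k : ℝ) := by simp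
        rw [h2] at h1
        have := (abs_le.1 (h1.trans hw)).1
        linarith
      have hdc : DiffContOnCl ℂ (qext f) S := by
        constructor
        · intro w hw
          exact (hdiffAt w (by
            have := hSre w (Metric.ball_subset_closedBall hw); linarith)).differentiableWithinAt
        · intro w hw
          have hw' : w ∈ Metric.closedBall ((k : ℤ) : ℂ) (3/4) := by
            exact closure_ball_subset_closedBall hw
          exact ((hdiffAt w (by have := hSre w hw'; linarith)).continuousAt).continuousWithinAt
      set M : ℝ := 2 * C * Real.exp (c * ((k : ℝ) + 3/4)) with hM
      have hfr : ∀ w ∈ frontier S, ‖qext f w‖ ≤ M := by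
        intro w hw
        rw [hS, frontier_ball _ (by norm_num : (3/4:ℝ) ≠ 0)] at hw
        rw [mem_sphere_iff_norm] at hw
        have habs : ‖w - ((k:ℤ):ℂ)‖ = 3/4 := hw
        have hsq : (w.re - (k:ℝ))^2 + w.im^2 = (3/4)^2 := by
          have h1 := Complex.sq_norm (w - ((k:ℤ):ℂ))
          rw [habs] at h1
          rw [Complex.normSq_apply] at h1
          have h2 : (w - ((k : ℤ) : ℂ)).re = w.re - (k : ℝ) := by simp
          have h3 : (w - ((k : ℤ) : ℂ)).im = w.im := by simp
          rw [h2, h3] at h1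
          nlinarith [h1]
        have hw_sin : 2⁻¹ ≤ ‖Complex.sin ((Real.pi : ℂ) * w)‖ := by
          apply half_le_abs_sin_pi
          by_cases himw : 4⁻¹ ≤ |w.im|
          · exact Or.inl himw
          · push_neg at himw
            refine Or.inr (fun j => ?_)
            have h4 : (w.re - (k:ℝ))^2 ≥ 1/2 := by nlinarith [abs_nonneg w.im, _root_.sq_abs w.im]
            have h5 : 6⁻¹ ≤ |w.re - (k:ℝ)| := by nlinarith [abs_nonneg (w.re - (k:ℝ)), _root_.sq_abs (w.re - (k:ℝ))]
            rcases eq_or_ne j k with rfl | hjk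
            · exact h5
            · have h6 : (1:ℝ) ≤ |(k:ℝ) - (j:ℝ)| := by
                have : (1:ℤ) ≤ |k - j| := Int.one_le_abs (sub_ne_zero.2 (Ne.symm hjk))
                calc (1:ℝ) ≤ |((k - j : ℤ) : ℝ)| := by exact_mod_cast this
                  _ = |(k:ℝ) - (j:ℝ)| := by push_cast; ring_nf
              have h7 : |w.re - (k:ℝ)| ≤ 3/4 := by
                nlinarith [abs_nonneg (w.re - (k:ℝ)), _root_.sq_abs (w.re - (k:ℝ)), sq_nonneg w.im]
              have h8 := abs_sub_abs_le_abs_sub ((k:ℝ) - (j:ℝ)) ((k:ℝ) - w.re)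
              have h9 : |(k:ℝ) - w.re| = |w.re - (k:ℝ)| := abs_sub_comm _ _
              have h10 : ((k:ℝ) - (j:ℝ)) - ((k:ℝ) - w.re) = w.re - (j:ℝ) := by ring
              rw [h10, h9] at h8
              calc (6⁻¹:ℝ) ≤ 1 - 3/4 := by norm_num
                _ ≤ |(k:ℝ) - (j:ℝ)| - |w.re - (k:ℝ)| := by linarith
                _ ≤ |w.re - (j:ℝ)| := h8
        have hne : Complex.sin ((Real.pi : ℂ) * w) ≠ 0 := by
          intro h0; rw [h0] at hw_sin; norm_num at hw_sin
        have hwre : (0:ℝ) ≤ w.re := by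
          have := hSre w (Metric.sphere_subset_closedBall (mem_sphere_iff_norm.2 hw))
          linarith
        have hwabs : ‖w‖ ≤ (k : ℝ) + 3/4 := by
          calc ‖w‖ = ‖(w - ((k:ℤ):ℂ)) + ((k:ℤ):ℂ)‖ := by ring_nf
            _ ≤ ‖w - ((k:ℤ):ℂ)‖ + ‖((k:ℤ):ℂ)‖ := norm_add_le _ _
            _ = 3/4 + |(k:ℝ)| := by rw [habs, Complex.norm_intCast]
            _ = (k:ℝ) + 3/4 := by rw [_root_.abs_of_nonneg (by linarith : (0:ℝ) ≤ (k:ℝ))]; ring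
        rw [qext_of_sin_ne hne, norm_div]
        calc ‖f w‖ / ‖Complex.sin ((Real.pi:ℂ) * w)‖
            ≤ (C * Real.exp (c * ‖w‖)) / 2⁻¹ :=
              div_le_div₀ (by positivity) (hbound w hwre) (by norm_num) hw_sin
          _ = 2 * C * Real.exp (c * ‖w‖) := by ring
          _ ≤ M := by
              rw [hM]
              have : Real.exp (c * ‖w‖) ≤ Real.exp (c * ((k:ℝ) + 3/4)) := by
                apply Real.exp_le_exp.2
                nlinarith
              nlinarith
      have hzS : z ∈ closure S := by
        apply subset_closure
        rw [hS, Metric.mem_ball, Complex.dist_eq]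
        calc ‖z - ((k:ℤ):ℂ)‖ ≤ |(z - ((k:ℤ):ℂ)).re| + |(z - ((k:ℤ):ℂ)).im| :=
              Complex.norm_le_abs_re_add_abs_im _
          _ = |z.re - (k:ℝ)| + |z.im| := by norm_num
          _ < 6⁻¹ + 4⁻¹ := by exact add_lt_add hkre him
          _ < 3/4 := by norm_num
      have hmax := Complex.norm_le_of_forall_mem_frontier_norm_le
        Metric.isBounded_ball hdc hfr hzS
      calc ‖qext f z‖ ≤ M := hmax
        _ ≤ 2 * C * Real.exp c * Real.exp (c * ‖z‖) := by
            have h1 : (k:ℝ) ≤ z.re + 6⁻¹ := by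
              have := (abs_lt.1 hkre).1; linarith
            have h2 : z.re ≤ ‖z‖ := Complex.re_le_norm z
            have h3 : c * ((k:ℝ) + 3/4) ≤ c + c * ‖z‖ := by nlinarith
            have h4 := Real.exp_le_exp.2 h3
            rw [Real.exp_add] at h4
            rw [hM]
            nlinarith [Real.exp_pos c, Real.exp_pos (c * ‖z‖)]
        _ ≤ A * Real.exp (c * ‖z‖) :=
            mul_le_mul_of_nonneg_right (le_max_right _ _) (Real.exp_pos _).le


/-! ### The multiplier -/

def mult (ε : ℝ) (z : ℂ) : ℂ :=
  Complex.exp ((ε : ℂ) * (z + 1) * (1 - Complex.log ((ε : ℂ) * (z + 1))))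

lemma abs_mult {ε : ℝ} (hε : 0 < ε) (z : ℂ) :
    ‖mult ε z‖ =
      Real.exp (ε * (z.re + 1) * (1 - Real.log (ε * ‖z + 1‖))
        + ε * z.im * Complex.arg (z + 1)) := by
  rw [mult, Complex.norm_exp]
  congr 1
  have hw : ((ε:ℂ) * (z+1)).re = ε * (z.re + 1) := by simp
  have hwim : ((ε:ℂ) * (z+1)).im = ε * z.im := by simp
  have habs : ‖(ε:ℂ) * (z+1)‖ = ε * ‖z+1‖ := by
    rw [norm_mul, Complex.norm_of_nonneg hε.le]
  have harg : ((ε:ℂ) * (z+1)).arg = (z+1).arg := Complex.arg_real_mul _ hε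
  rw [show (ε:ℂ) * (z+1) * (1 - Complex.log ((ε:ℂ)*(z+1)))
      = (ε:ℂ)*(z+1) - (ε:ℂ)*(z+1) * Complex.log ((ε:ℂ)*(z+1)) by ring]
  simp only [Complex.sub_re, Complex.mul_re, Complex.log_re, Complex.log_im, Complex.ofReal_re,
    Complex.ofReal_im, Complex.add_re, Complex.add_im, Complex.one_re, Complex.one_im]
  rw [habs, harg]
  ring_nf
  simp only [Complex.add_im, Complex.mul_im, Complex.ofReal_re, Complex.ofReal_im]
  ring

lemma mult_differentiableAt {ε : ℝ} (hε : 0 < ε) {z : ℂ} (hz : 0 ≤ z.re) :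
    DifferentiableAt ℂ (mult ε) z := by
  have hslit : (ε:ℂ) * (z + 1) ∈ Complex.slitPlane := by
    rw [Complex.mem_slitPlane_iff]
    left
    have : ((ε:ℂ) * (z+1)).re = ε * (z.re + 1) := by simp
    rw [this]
    positivity
  have h1 : DifferentiableAt ℂ (fun w : ℂ => (ε:ℂ) * (w + 1)) z :=
    ((differentiableAt_id.add_const 1).const_mul _)
  have h2 : DifferentiableAt ℂ (fun w : ℂ => Complex.log ((ε:ℂ) * (w + 1))) z :=
    h1.clog hslit
  exact (((h1.mul ((differentiableAt_const 1).sub h2))).cexp)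

end CarlsonAux

end CarlsonAux

open CarlsonAux in
/-- **Carlson's theorem.** Let `f` be holomorphic on an open set containing the closed right
half-plane `{z : 0 ≤ Re z}`, and suppose there are constants `C > 0` and `0 ≤ c < π` with
`|f z| ≤ C * exp (c * |z|)` on the closed right half-plane. If `f` vanishes at every
nonnegative integer, then `f` vanishes on the open right half-plane. -/
theorem carlson_theorem (f : ℂ → ℂ) (U : Set ℂ) (hU : IsOpen U)
    (hUsub : {z : ℂ | 0 ≤ z.re} ⊆ U) (hf : DifferentiableOn ℂ f U)
    (C c : ℝ) (hC : 0 < C) (hc0 : 0 ≤ c) (hcπ : c < Real.pi)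
    (hbound : ∀ z : ℂ, 0 ≤ z.re → ‖f z‖ ≤ C * Real.exp (c * ‖z‖))
    (hzero : ∀ n : ℕ, f (n : ℂ) = 0) :
    ∀ z : ℂ, 0 < z.re → f z = 0 := by
  classical
  obtain ⟨A, hApos, hAq⟩ := qext_bound hU hUsub hf hC hc0 hbound hzero
  set ε : ℝ := (Real.pi - c) / Real.pi with hεdef
  have hε : 0 < ε := div_pos (by linarith) Real.pi_pos
  have hεπ : c - Real.pi + ε * Real.pi / 2 = (c - Real.pi) / 2 := by
    rw [hεdef, div_mul_cancel₀ _ Real.pi_ne_zero]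
    ring
  set g : ℂ → ℂ := fun z => qext f z * mult ε z with hg
  have hqdiff : ∀ z : ℂ, 0 ≤ z.re → DifferentiableAt ℂ (qext f) z := fun z hz =>
    qext_differentiableAt hU hf hzero (hUsub hz) (by norm_num; linarith)
  have hgdiff : ∀ z : ℂ, 0 ≤ z.re → DifferentiableAt ℂ g z := fun z hz =>
    (hqdiff z hz).mul (mult_differentiableAt hε hz)
  -- DiffContOnCl
  have hd : DiffContOnCl ℂ g {z : ℂ | 0 < z.re} := by
    constructor
    · exact fun z hz => (hgdiff z (le_of_lt hz)).differentiableWithinAt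
    · rw [Complex.closure_setOf_lt_re]
      exact fun z hz => (hgdiff z hz).continuousAt.continuousWithinAt
  -- growth estimate
  have habs_g : ∀ z : ℂ, 0 ≤ z.re → ‖g z‖ ≤
      A * Real.exp (c * ‖z‖) *
        Real.exp (ε * (z.re + 1) * (1 - Real.log (ε * ‖z + 1‖))
          + ε * z.im * Complex.arg (z + 1)) := by
    intro z hz
    rw [hg]
    simp only [norm_mul]
    rw [abs_mult hε]
    exact mul_le_mul_of_nonneg_right (hAq z hz) (Real.exp_pos _).le
  have harg_le : ∀ z : ℂ, 0 ≤ z.re → ε * z.im * Complex.arg (z + 1) ≤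
      ε * Real.pi / 2 * ‖z‖ := by
    intro z hz
    have h1 : |Complex.arg (z + 1)| ≤ Real.pi / 2 := by
      rw [Complex.abs_arg_le_pi_div_two_iff]
      have : (z + 1).re = z.re + 1 := by simp
      rw [this]; linarith
    have h2 : |z.im| ≤ ‖z‖ := Complex.abs_im_le_norm z
    calc ε * z.im * Complex.arg (z + 1) ≤ |ε * z.im * Complex.arg (z + 1)| := le_abs_self _
      _ = ε * |z.im| * |Complex.arg (z + 1)| := by
          rw [abs_mul, abs_mul, _root_.abs_of_pos hε]
      _ ≤ ε * ‖z‖ * (Real.pi / 2) := by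
          apply mul_le_mul (by nlinarith) h1 (abs_nonneg _) (by positivity)
      _ = ε * Real.pi / 2 * ‖z‖ := by ring
  -- hexp
  have hexp : ∃ c' < (2:ℝ), ∃ B, g =O[Bornology.cobounded ℂ ⊓ 𝓟 {z : ℂ | 0 < z.re}]
      fun z => Real.exp (B * ‖z‖ ^ c') := by
    refine ⟨1, one_lt_two, c + ε * Real.pi / 2, ?_⟩
    rw [Asymptotics.isBigO_iff]
    refine ⟨A, ?_⟩
    filter_upwards [(eventually_cobounded_le_norm (Real.exp 1 / ε + 1)).filter_mono inf_le_left,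
      (Filter.eventually_principal.2 (fun (z : ℂ) (hz : z ∈ {z : ℂ | 0 < z.re}) => hz)).filter_mono
        inf_le_right] with z hz1 hz2
    have hzre : (0:ℝ) ≤ z.re := le_of_lt hz2
    have hznorm : Real.exp 1 / ε + 1 ≤ ‖z‖ := hz1
    have hlog : (1:ℝ) ≤ Real.log (ε * ‖z + 1‖) := by
      have h1 : ‖z‖ - 1 ≤ ‖z + 1‖ := by
        have := norm_add_le (z + 1) (-1)
        simp only [add_neg_cancel_right] at this
        have h2 : ‖(-1 : ℂ)‖ = 1 := by simp
        rw [h2] at this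
        linarith
      have h3 : Real.exp 1 ≤ ε * ‖z + 1‖ := by
        have h4 : Real.exp 1 / ε ≤ ‖z + 1‖ := by linarith
        calc Real.exp 1 = ε * (Real.exp 1 / ε) := by field_simp
          _ ≤ ε * ‖z + 1‖ := by nlinarith
      calc (1:ℝ) = Real.log (Real.exp 1) := (Real.log_exp 1).symm
        _ ≤ Real.log (ε * ‖z + 1‖) :=
            Real.log_le_log (Real.exp_pos 1) h3
    have hterm1 : ε * (z.re + 1) * (1 - Real.log (ε * ‖z + 1‖)) ≤ 0 := by
      apply mul_nonpos_of_nonneg_of_nonpos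
      · positivity
      · linarith
    have hstep : A * Real.exp (c * ‖z‖) *
        Real.exp (ε * (z.re + 1) * (1 - Real.log (ε * ‖z + 1‖))
          + ε * z.im * Complex.arg (z + 1))
        ≤ A * Real.exp ((c + ε * Real.pi / 2) * ‖z‖) := by
      have h5 := harg_le z hzre
      calc A * Real.exp (c * ‖z‖) *
            Real.exp (ε * (z.re + 1) * (1 - Real.log (ε * ‖z + 1‖))
              + ε * z.im * Complex.arg (z + 1))
          ≤ A * Real.exp (c * ‖z‖) * Real.exp (ε * Real.pi / 2 * ‖z‖) := by
            apply mul_le_mul_of_nonneg_left _ (by positivity)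
            apply Real.exp_le_exp.2
            linarith
        _ = A * Real.exp ((c + ε * Real.pi / 2) * ‖z‖) := by
            rw [mul_assoc, ← Real.exp_add]
            ring_nf
    calc ‖g z‖
        ≤ A * Real.exp (c * ‖z‖) *
            Real.exp (ε * (z.re + 1) * (1 - Real.log (ε * ‖z + 1‖))
              + ε * z.im * Complex.arg (z + 1)) := habs_g z hzre
      _ ≤ A * Real.exp ((c + ε * Real.pi / 2) * ‖z‖) := hstep
      _ = A * ‖Real.exp ((c + ε * Real.pi / 2) * ‖z‖ ^ (1:ℝ))‖ := by
          rw [Real.rpow_one, Real.norm_eq_abs, Real.abs_exp]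
  -- him : bounded on the imaginary axis
  have him : ∃ C₂ : ℝ, ∀ y : ℝ, ‖g ((y:ℂ) * Complex.I)‖ ≤ C₂ := by
    set a₀ : ℝ := ε * 2 * (1 + |Real.log ε|) with ha₀
    refine ⟨max (A * Real.exp (c + a₀ + ε * Real.pi / 2)) (4 * C * Real.exp a₀), fun y => ?_⟩
    set z : ℂ := (y:ℂ) * Complex.I with hzdef
    have hzre : z.re = 0 := by simp [hzdef]
    have hzim : z.im = y := by simp [hzdef]
    have hzabs : ‖z‖ = |y| := by simp [hzdef]
    have hmub : ‖mult ε z‖ ≤ Real.exp (a₀ + ε * Real.pi / 2 * |y|) := by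
      rw [abs_mult hε, Real.exp_le_exp]
      have h1 : ‖z + 1‖ ≤ |y| + 1 := by
        calc ‖z + 1‖ ≤ ‖z‖ + 1 := by
              simpa using norm_add_le z 1
          _ = |y| + 1 := by rw [hzabs]
      have h2 : (1:ℝ) ≤ ‖z + 1‖ := by
        have : (1:ℝ) = (z+1).re := by rw [Complex.add_re, hzre]; simp
        rw [this]
        exact (Complex.re_le_norm _)
      have hterm1 : ε * (z.re + 1) * (1 - Real.log (ε * ‖z + 1‖)) ≤ a₀ := by
        rw [hzre, zero_add, mul_one]
        have hlb : Real.log ε ≤ Real.log (ε * ‖z + 1‖) :=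
          Real.log_le_log hε (by nlinarith)
        have : 1 - Real.log (ε * ‖z + 1‖) ≤ 1 + |Real.log ε| := by
          have := neg_abs_le (Real.log ε)
          linarith
        rw [ha₀]
        nlinarith [abs_nonneg (Real.log ε)]
      have hterm2 : ε * z.im * Complex.arg (z + 1) ≤ ε * Real.pi / 2 * |y| := by
        have := harg_le z (by rw [hzre])
        rw [hzabs] at this
        exact this
      linarith
    by_cases hy : |y| ≤ 1
    · have hq := hAq z (by rw [hzre])
      rw [hg]
      simp only [norm_mul]
      calc ‖qext f z‖ * ‖mult ε z‖
          ≤ (A * Real.exp (c * ‖z‖)) * Real.exp (a₀ + ε * Real.pi / 2 * |y|) := by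
            apply mul_le_mul hq hmub (norm_nonneg _) (by positivity)
        _ ≤ A * Real.exp c * Real.exp (a₀ + ε * Real.pi / 2) := by
            rw [hzabs]
            have e1 : Real.exp (c * |y|) ≤ Real.exp c := by
              apply Real.exp_le_exp.2; nlinarith [abs_nonneg y]
            have e2 : Real.exp (a₀ + ε * Real.pi / 2 * |y|) ≤ Real.exp (a₀ + ε * Real.pi / 2) := by
              apply Real.exp_le_exp.2
              nlinarith [abs_nonneg y, Real.pi_pos]
            exact mul_le_mul (mul_le_mul_of_nonneg_left e1 hApos.le) e2
              (Real.exp_pos _).le (by positivity)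
        _ = A * Real.exp (c + a₀ + ε * Real.pi / 2) := by
            rw [mul_assoc, ← Real.exp_add]; ring_nf
        _ ≤ max (A * Real.exp (c + a₀ + ε * Real.pi / 2)) (4 * C * Real.exp a₀) := le_max_left _ _
    · push_neg at hy
      -- use the sinh lower bound
      have hsinh : Real.exp (Real.pi * |y|) / 4 ≤ ‖Complex.sin ((Real.pi:ℂ) * z)‖ := by
        have h1 : |Real.sinh ((Real.pi:ℂ) * z).im| ≤ ‖Complex.sin ((Real.pi:ℂ) * z)‖ :=
          sinh_le_abs_sin _
        have h2 : ((Real.pi:ℂ) * z).im = Real.pi * y := by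
          simp [hzdef]
        rw [h2, Real.abs_sinh] at h1
        have h3 : |Real.pi * y| = Real.pi * |y| := by
          rw [abs_mul, _root_.abs_of_pos Real.pi_pos]
        rw [h3] at h1
        refine le_trans ?_ h1
        rw [Real.sinh_eq]
        have h4 : Real.exp (-(Real.pi * |y|)) ≤ Real.exp (Real.pi * |y|) / 2 := by
          have h5 : Real.exp (-(Real.pi * |y|)) ≤ 1 := by
            apply Real.exp_le_one_iff.2
            nlinarith [Real.pi_pos, abs_nonneg y]
          have h6 : (2:ℝ) ≤ Real.exp (Real.pi * |y|) := by
            have h7 : (2:ℝ) ≤ 1 + Real.pi * |y| := by nlinarith [Real.pi_gt_three]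
            calc (2:ℝ) ≤ 1 + Real.pi * |y| := h7
              _ ≤ Real.exp (Real.pi * |y|) := by
                  linarith [Real.add_one_le_exp (Real.pi * |y|)]
          linarith
        linarith [h4]
      have hsne : Complex.sin ((Real.pi:ℂ) * z) ≠ 0 := by
        intro h0
        rw [h0, norm_zero] at hsinh
        nlinarith [Real.exp_pos (Real.pi * |y|)]
      rw [hg]
      simp only [norm_mul]
      have hq : ‖qext f z‖ ≤ 4 * C * Real.exp ((c - Real.pi) * |y|) := by
        rw [qext_of_sin_ne hsne, norm_div]
        have hfz : ‖f z‖ ≤ C * Real.exp (c * |y|) := by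
          have := hbound z (by rw [hzre])
          rwa [hzabs] at this
        calc ‖f z‖ / ‖Complex.sin ((Real.pi:ℂ) * z)‖
            ≤ (C * Real.exp (c * |y|)) / (Real.exp (Real.pi * |y|) / 4) :=
              div_le_div₀ (by positivity) hfz (by positivity) hsinh
          _ = 4 * C * (Real.exp (c * |y|) / Real.exp (Real.pi * |y|)) := by
              field_simp
          _ = 4 * C * Real.exp (c * |y| - Real.pi * |y|) := by rw [Real.exp_sub]
          _ = 4 * C * Real.exp ((c - Real.pi) * |y|) := by ring_nf
      calc ‖qext f z‖ * ‖mult ε z‖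
          ≤ (4 * C * Real.exp ((c - Real.pi) * |y|)) * Real.exp (a₀ + ε * Real.pi / 2 * |y|) :=
            mul_le_mul hq hmub (norm_nonneg _) (by positivity)
        _ = 4 * C * Real.exp a₀ *
              Real.exp ((c - Real.pi) * |y| + ε * Real.pi / 2 * |y|) := by
            simp only [Real.exp_add]
            ring
        _ ≤ 4 * C * Real.exp a₀ := by
            have hexpo : (c - Real.pi) * |y| + ε * Real.pi / 2 * |y|
                = ((c - Real.pi) / 2) * |y| := by
              have h8 : (c - Real.pi) + ε * Real.pi / 2 = (c - Real.pi) / 2 := by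
                have := hεπ; linarith
              linear_combination |y| * h8
            rw [hexpo]
            have h9 : Real.exp ((c - Real.pi) / 2 * |y|) ≤ 1 := by
              apply Real.exp_le_one_iff.2
              have : (c - Real.pi) / 2 ≤ 0 := by linarith
              nlinarith [abs_nonneg y]
            exact mul_le_of_le_one_right (by positivity) h9
        _ ≤ max (A * Real.exp (c + a₀ + ε * Real.pi / 2)) (4 * C * Real.exp a₀) :=
            le_max_right _ _
  -- hre : superexponential decay on the real axis
  have hre : Asymptotics.SuperpolynomialDecay atTop Real.exp (fun x : ℝ => ‖g ((x:ℝ) : ℂ)‖) := by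
    intro n
    have hlogt : Tendsto (fun x : ℝ => Real.log (ε * (x + 1))) atTop atTop := by
      apply Real.tendsto_log_atTop.comp
      exact (Filter.tendsto_atTop_add_const_right atTop 1 tendsto_id).const_mul_atTop hε
    apply squeeze_zero' (g := fun x : ℝ => A * Real.exp (-x))
    · filter_upwards with x
      positivity
    · filter_upwards [hlogt.eventually_ge_atTop (((n:ℝ) + c + 1) / ε + 1),
        eventually_ge_atTop (0:ℝ)] with x hlog hx0
      have hzre : ((x:ℝ) : ℂ).re = x := Complex.ofReal_re x
      have habsx : ‖((x:ℝ) : ℂ)‖ = x := by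
        rw [Complex.norm_real, Real.norm_eq_abs, _root_.abs_of_nonneg hx0]
      have hcast : ((x:ℝ) : ℂ) + 1 = ((x + 1 : ℝ) : ℂ) := by push_cast; ring
      have habs1 : ‖((x:ℝ) : ℂ) + 1‖ = x + 1 := by
        rw [hcast, Complex.norm_real, Real.norm_eq_abs, _root_.abs_of_nonneg (by linarith)]
      have harg1 : Complex.arg (((x:ℝ) : ℂ) + 1) = 0 := by
        rw [hcast]
        exact Complex.arg_ofReal_of_nonneg (by linarith)
      have hb := habs_g ((x:ℝ) : ℂ) (by rw [hzre]; exact hx0)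
      rw [hzre, habsx, habs1, harg1, mul_zero, add_zero] at hb
      have hb2 : ‖g ((x:ℝ) : ℂ)‖ ≤
          A * Real.exp (c * x + ε * (x + 1) * (1 - Real.log (ε * (x + 1)))) := by
        refine hb.trans (le_of_eq ?_)
        rw [mul_assoc, ← Real.exp_add]
      have hkey : ε * (x + 1) * (1 - Real.log (ε * (x + 1)))
          ≤ -(((n:ℝ) + c + 1) * (x + 1)) := by
        have h1 : 1 - Real.log (ε * (x + 1)) ≤ -(((n:ℝ) + c + 1) / ε) := by linarith
        calc ε * (x + 1) * (1 - Real.log (ε * (x + 1)))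
            ≤ ε * (x + 1) * (-(((n:ℝ) + c + 1) / ε)) := by
              apply mul_le_mul_of_nonneg_left h1 (by positivity)
          _ = -(((n:ℝ) + c + 1) * (x + 1)) := by field_simp
      calc Real.exp x ^ n * ‖g ((x:ℝ) : ℂ)‖
          ≤ Real.exp ((n:ℝ) * x) *
              (A * Real.exp (c * x + ε * (x + 1) * (1 - Real.log (ε * (x + 1))))) := by
            rw [Real.exp_nat_mul]
            exact mul_le_mul_of_nonneg_left hb2 (by positivity)
        _ = A * Real.exp ((n:ℝ) * x + (c * x + ε * (x + 1) * (1 - Real.log (ε * (x + 1))))) := by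
            rw [mul_left_comm, ← Real.exp_add]
        _ ≤ A * Real.exp (-x) := by
            apply mul_le_mul_of_nonneg_left _ hApos.le
            apply Real.exp_le_exp.2
            have hn0 : (0:ℝ) ≤ (n:ℝ) := Nat.cast_nonneg n
            nlinarith [hkey]
    · have h1 : Tendsto (fun x : ℝ => Real.exp (-x)) atTop (𝓝 0) :=
        Real.tendsto_exp_atBot.comp tendsto_neg_atTop_atBot
      simpa using h1.const_mul A
  -- apply Phragmen–Lindelöf
  have hEq := PhragmenLindelof.eq_zero_on_right_half_plane_of_superexponential_decay
    hd hexp hre him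
  intro z hzre
  have hg0 : g z = 0 := by
    have := hEq (le_of_lt hzre : z ∈ {z : ℂ | 0 ≤ z.re})
    simpa using this
  have hq0 : qext f z = 0 := by
    have hg0' : qext f z * mult ε z = 0 := hg0
    rcases mul_eq_zero.1 hg0' with h | h
    · exact h
    · exact absurd h (Complex.exp_ne_zero _)
  by_cases hs : Complex.sin ((Real.pi:ℂ) * z) = 0
  · obtain ⟨n, rfl⟩ := natural_of_sin_eq hs (by norm_num; linarith)
    exact hzero n
  · have h1 := qext_of_sin_ne (f := f) hs
    rw [hq0] at h1
    rcases div_eq_zero_iff.1 h1.symm with h | h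
    · exact h
    · exact absurd h hs
end

section
/- Let t ∈ A_q, z ∈ 𝕋, and let k_1 = diag(u_1,v_1), k_2 = diag(u_2,v_2) ∈ K_1. Set g := k_1 · b_{t,z} · k_2 ∈ SU(p+q). Then the eigenvalues of D(g)*D(g), counted with multiplicity, are cos²t_1, …, cos²t_q (equivalently, the singular values of D(g) listed in increasing order are cos t_1 ≤ … ≤ cos t_q), and det D(g) = z · ∏_{j=1}^q cos t_j. In particular, if t_1 < π/2 then z = det D(g) / |det D(g)|. -/
noncomputable section
open Matrix

/-- the alcove `A_q = {t : π/2 ≥ t₁ ≥ … ≥ t_q ≥ 0}` (coordinates `t 0, …, t (q-1)`). -/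
def Aq (q : ℕ) : Set (Fin q → ℝ) :=
  {t | (∀ j, 0 ≤ t j ∧ t j ≤ Real.pi / 2) ∧ (∀ i j : Fin q, i ≤ j → t j ≤ t i)}

/-- `h(z) = diag(z,1,…,1) ∈ M_q(ℂ)` -/
def hMat (q : ℕ) (z : ℂ) : Matrix (Fin q) (Fin q) ℂ :=
  Matrix.diagonal (fun j => if j.val = 0 then z else 1)

def cosMat (q : ℕ) (t : Fin q → ℝ) : Matrix (Fin q) (Fin q) ℂ :=
  Matrix.diagonal (fun j => (Real.cos (t j) : ℂ))

def sinMat (q : ℕ) (t : Fin q → ℝ) : Matrix (Fin q) (Fin q) ℂ :=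
  Matrix.diagonal (fun j => (Real.sin (t j) : ℂ))

/-- index type for `SU(p+q)` with `p = m + q`: blocks of sizes `m, q, q`. -/
abbrev bidx (m q : ℕ) := (Fin m ⊕ Fin q) ⊕ Fin q

/-- the matrix `b_{t,z}` -/
def bMat (m q : ℕ) (t : Fin q → ℝ) (z : ℂ) : Matrix (bidx m q) (bidx m q) ℂ :=
  Matrix.fromBlocks
    (Matrix.fromBlocks 1 0 0 (hMat q z⁻¹ * cosMat q t))
    (Matrix.fromRows 0 (-(sinMat q t)))
    (Matrix.fromCols 0 (sinMat q t))
    (hMat q z * cosMat q t)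

/-- block diagonal embedding `diag(u,v)`. -/
def diagBlock (m q : ℕ) (u : Matrix (Fin m ⊕ Fin q) (Fin m ⊕ Fin q) ℂ)
    (v : Matrix (Fin q) (Fin q) ℂ) : Matrix (bidx m q) (bidx m q) ℂ :=
  Matrix.fromBlocks u 0 0 v

/-- lower-right `q×q` block `D(g)`. -/
def lrBlock (m q : ℕ) (g : Matrix (bidx m q) (bidx m q) ℂ) :
    Matrix (Fin q) (Fin q) ℂ :=
  Matrix.of fun i j => g (Sum.inr i) (Sum.inr j)

/-- increasingly ordered singular values of a complex `q×q` matrix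
(square roots of the eigenvalues of `Xᴴ X`, in increasing order). -/
def sigUp {q : ℕ} (X : Matrix (Fin q) (Fin q) ℂ) : Fin q → ℝ :=
  fun j => Real.sqrt
    (((Matrix.isHermitian_conjTranspose_mul_self X).eigenvalues ∘
      Tuple.sort (Matrix.isHermitian_conjTranspose_mul_self X).eigenvalues) j)


section AuxLemmas
open Polynomial

private lemma myCharpolyConj {n : ℕ} (V A : Matrix (Fin n) (Fin n) ℂ)
    (h1 : star V * V = 1) (h2 : V * star V = 1) :
    (star V * A * V).charpoly = A.charpoly := by
  have hcm : charmatrix (star V * A * V)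
      = (star V).map C * charmatrix A * V.map C := by
    have hX : (star V).map (C : ℂ →+* ℂ[X]) * Matrix.scalar (Fin n) (X : ℂ[X]) * V.map C
        = Matrix.scalar (Fin n) (X : ℂ[X]) := by
      rw [← (Matrix.scalar_commute (X : ℂ[X]) (fun r => Commute.all _ _) ((star V).map C)).eq,
        mul_assoc, ← Matrix.map_mul, h1]
      simp
    rw [charmatrix, charmatrix]
    simp only [RingHom.mapMatrix_apply]
    rw [mul_sub, sub_mul, hX, ← Matrix.map_mul, ← Matrix.map_mul]
  rw [Matrix.charpoly, Matrix.charpoly, hcm, det_mul, det_mul, mul_comm, ← mul_assoc,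
    ← det_mul, ← Matrix.map_mul, h2]
  simp

private lemma myCharpolyDiag {n : ℕ} (d : Fin n → ℂ) :
    (Matrix.diagonal d).charpoly = ∏ j, (X - C (d j)) := by
  rw [Matrix.charpoly_of_upperTriangular _ (Matrix.blockTriangular_diagonal _)]
  simp

private lemma myEigMultiset {n : ℕ} (dfun : Fin n → ℝ) (V : Matrix (Fin n) (Fin n) ℂ)
    (hV : V ∈ Matrix.unitaryGroup (Fin n) ℂ)
    {A : Matrix (Fin n) (Fin n) ℂ} (hA : A.IsHermitian)
    (h : A = star V * Matrix.diagonal (fun j => ((dfun j : ℝ) : ℂ)) * V) :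
    Multiset.map hA.eigenvalues Finset.univ.val = Multiset.map dfun Finset.univ.val := by
  have hpoly : ∀ (e : Fin n → ℝ) (W : Matrix (Fin n) (Fin n) ℂ),
      W ∈ Matrix.unitaryGroup (Fin n) ℂ →
      A = star W * Matrix.diagonal (fun j => ((e j : ℝ) : ℂ)) * W →
      A.charpoly = ∏ j, (X - C ((e j : ℂ))) := by
    intro e W hW hAe
    rw [hAe, myCharpolyConj _ _ (Matrix.mem_unitaryGroup_iff'.mp hW)
      (Matrix.mem_unitaryGroup_iff.mp hW), myCharpolyDiag]
  have h1 : A.charpoly = ∏ j, (X - C ((dfun j : ℂ))) := hpoly dfun V hV h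
  have h2 : A.charpoly = ∏ j, (X - C ((hA.eigenvalues j : ℂ))) := by
    refine hpoly hA.eigenvalues (star (hA.eigenvectorUnitary : Matrix (Fin n) (Fin n) ℂ))
      ?_ ?_
    · exact Unitary.star_mem hA.eigenvectorUnitary.2
    · rw [star_star]
      exact hA.spectral_theorem
  have key : Multiset.map (fun j => ((hA.eigenvalues j : ℝ) : ℂ)) Finset.univ.val
      = Multiset.map (fun j => ((dfun j : ℝ) : ℂ)) Finset.univ.val := by
    have e1 := Polynomial.roots_multiset_prod_X_sub_C
      (Multiset.map (fun j => ((hA.eigenvalues j : ℝ) : ℂ)) Finset.univ.val)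
    have e2 := Polynomial.roots_multiset_prod_X_sub_C
      (Multiset.map (fun j => ((dfun j : ℝ) : ℂ)) Finset.univ.val)
    rw [← e1, ← e2]
    congr 1
    rw [Multiset.map_map, Multiset.map_map]
    have hp : ∀ (f : Fin n → ℝ),
        (Multiset.map ((fun a : ℂ => X - C a) ∘ fun j => ((f j : ℝ) : ℂ))
          Finset.univ.val).prod = ∏ j, (X - C ((f j : ℂ))) := by
      intro f; rfl
    rw [hp, hp, ← h1, ← h2]
  have : Multiset.map (Complex.ofReal) (Multiset.map hA.eigenvalues Finset.univ.val)
      = Multiset.map (Complex.ofReal) (Multiset.map dfun Finset.univ.val) := by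
    rw [Multiset.map_map, Multiset.map_map]
    exact key
  exact Multiset.map_injective Complex.ofReal_injective this

private lemma mySortedUnique {n : ℕ} {e d : Fin n → ℝ}
    (h : Multiset.map e Finset.univ.val = Multiset.map d Finset.univ.val) :
    e ∘ Tuple.sort e = d ∘ Tuple.sort d := by
  have hperm : ∀ (σ : Equiv.Perm (Fin n)) (f : Fin n → ℝ),
      Finset.univ.val.map (f ∘ σ) = Finset.univ.val.map f := by
    intro σ f
    rw [← Multiset.map_map]
    congr 1
    conv_rhs => rw [← Finset.map_univ_equiv σ]
    simp
  rw [← List.ofFn_inj]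
  have hp : (List.ofFn (e ∘ Tuple.sort e)).Perm (List.ofFn (d ∘ Tuple.sort d)) := by
    rw [← Multiset.coe_eq_coe, ← Fin.univ_val_map, ← Fin.univ_val_map, hperm, hperm, h]
  exact List.Perm.eq_of_sortedLE (Tuple.monotone_sort e).sortedLE_ofFn
    (Tuple.monotone_sort d).sortedLE_ofFn hp


end AuxLemmas

/-- **Recovering the double coset data from `g`.** If `g = k₁ · b_{t,z} · k₂` with
`k₁, k₂ ∈ K₁ = SU(p) × SU(q)`, then the eigenvalues of `D(g)ᴴ D(g)`, counted with
multiplicity, are `cos² t₁, …, cos² t_q` (equivalently, the increasingly ordered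
singular values of `D(g)` are `cos t₁ ≤ … ≤ cos t_q`), `det D(g) = z · ∏ⱼ cos tⱼ`,
and if `t₁ < π/2` then `z = det D(g) / |det D(g)|`. -/
theorem doubleCoset_data (m q : ℕ) (hm : 1 ≤ m) (hq : 1 ≤ q)
    (t : Fin q → ℝ) (ht : t ∈ Aq q) (z : ℂ) (hz : ‖z‖ = 1)
    (u₁ u₂ : Matrix (Fin m ⊕ Fin q) (Fin m ⊕ Fin q) ℂ)
    (v₁ v₂ : Matrix (Fin q) (Fin q) ℂ)
    (hu₁ : u₁ ∈ Matrix.specialUnitaryGroup (Fin m ⊕ Fin q) ℂ)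
    (hu₂ : u₂ ∈ Matrix.specialUnitaryGroup (Fin m ⊕ Fin q) ℂ)
    (hv₁ : v₁ ∈ Matrix.specialUnitaryGroup (Fin q) ℂ)
    (hv₂ : v₂ ∈ Matrix.specialUnitaryGroup (Fin q) ℂ)
    (g : Matrix (bidx m q) (bidx m q) ℂ)
    (hg : g = diagBlock m q u₁ v₁ * bMat m q t z * diagBlock m q u₂ v₂) :
    (∃ σ : Equiv.Perm (Fin q), ∀ j,
        (Matrix.isHermitian_conjTranspose_mul_self (lrBlock m q g)).eigenvalues (σ j)
          = Real.cos (t j) ^ 2) ∧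
    (∀ j, sigUp (lrBlock m q g) j = Real.cos (t j)) ∧
    (lrBlock m q g).det = z * ∏ j, (Real.cos (t j) : ℂ) ∧
    (t ⟨0, hq⟩ < Real.pi / 2 →
      z = (lrBlock m q g).det / ((‖(lrBlock m q g).det‖ : ℝ) : ℂ)) := by
  obtain ⟨hv₁u, hv₁d⟩ := Matrix.mem_specialUnitaryGroup_iff.mp hv₁
  obtain ⟨hv₂u, hv₂d⟩ := Matrix.mem_specialUnitaryGroup_iff.mp hv₂
  set hcM : Matrix (Fin q) (Fin q) ℂ := hMat q z * cosMat q t with hcM_def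
  -- the lower-right block
  have hD : lrBlock m q g = v₁ * hcM * v₂ := by
    subst hg
    ext i j
    simp [lrBlock, diagBlock, bMat, Matrix.fromBlocks_multiply, hcM_def]
  set d : Fin q → ℝ := fun j => Real.cos (t j) ^ 2 with d_def
  have hcos0 : ∀ j, 0 ≤ Real.cos (t j) := fun j =>
    Real.cos_nonneg_of_mem_Icc ⟨by linarith [(ht.1 j).1, Real.pi_pos], (ht.1 j).2⟩
  have hdmono : Monotone d := by
    intro i j hij
    have h1 : t j ≤ t i := ht.2 i j hij
    have h2 : Real.cos (t i) ≤ Real.cos (t j) :=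
      Real.cos_le_cos_of_nonneg_of_le_pi (ht.1 j).1 (by linarith [(ht.1 i).2, Real.pi_pos]) h1
    exact pow_le_pow_left₀ (hcos0 i) h2 2
  -- the hermitian square
  have hzz : (starRingEnd ℂ) z * z = 1 := by
    rw [mul_comm, Complex.mul_conj, Complex.normSq_eq_norm_sq, hz]
    norm_num
  have hcM_diag : hcM = Matrix.diagonal
      (fun j : Fin q => (if j.val = 0 then z else 1) * (Real.cos (t j) : ℂ)) := by
    rw [hcM_def, hMat, cosMat, Matrix.diagonal_mul_diagonal]
  have hdiag : star hcM * hcM = Matrix.diagonal (fun j => ((d j : ℝ) : ℂ)) := by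
    rw [hcM_diag, Matrix.star_eq_conjTranspose, Matrix.diagonal_conjTranspose,
      Matrix.diagonal_mul_diagonal]
    refine congrArg Matrix.diagonal (funext fun j => ?_)
    simp only [Pi.star_apply]
    have hfact : ∀ c w : ℂ, star (w * c) * (w * c) = (star w * w) * (star c * c) := by
      intro c w; rw [star_mul']; ring
    by_cases hj : j.val = 0
    · rw [if_pos hj, hfact]
      rw [Complex.star_def, Complex.conj_ofReal]
      rw [hzz, one_mul, d_def]
      push_cast; ring
    · rw [if_neg hj, hfact, star_one, one_mul, Complex.star_def, Complex.conj_ofReal, d_def]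
      push_cast; ring
  have hherm : (lrBlock m q g)ᴴ * lrBlock m q g
      = star v₂ * Matrix.diagonal (fun j => ((d j : ℝ) : ℂ)) * v₂ := by
    rw [hD]
    have hv1' : star v₁ * v₁ = 1 := Matrix.mem_unitaryGroup_iff'.mp hv₁u
    calc (v₁ * hcM * v₂)ᴴ * (v₁ * hcM * v₂)
        = star v₂ * (star hcM * (star v₁ * (v₁ * (hcM * v₂)))) := by
          simp only [← Matrix.star_eq_conjTranspose, Matrix.star_mul, mul_assoc]
      _ = star v₂ * (star hcM * (hcM * v₂)) := by
          rw [← mul_assoc (star v₁) v₁, hv1', one_mul]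
      _ = star v₂ * (Matrix.diagonal (fun j => ((d j : ℝ) : ℂ)) * v₂) := by
          rw [← mul_assoc (star hcM), hdiag]
      _ = star v₂ * Matrix.diagonal (fun j => ((d j : ℝ) : ℂ)) * v₂ := by
          rw [mul_assoc]
  set hA := Matrix.isHermitian_conjTranspose_mul_self (lrBlock m q g) with hA_def
  have hms : Multiset.map hA.eigenvalues Finset.univ.val = Multiset.map d Finset.univ.val :=
    myEigMultiset d v₂ hv₂u hA hherm
  have hkey : hA.eigenvalues ∘ Tuple.sort hA.eigenvalues = d := by
    have h2 := mySortedUnique hms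
    rwa [Tuple.sort_eq_refl_iff_monotone.mpr hdmono, Equiv.coe_refl,
      Function.comp_id] at h2
  -- determinant
  have hdet : (lrBlock m q g).det = z * ∏ j, (Real.cos (t j) : ℂ) := by
    have hh : (hMat q z).det = z := by
      rw [hMat, Matrix.det_diagonal]
      rw [Finset.prod_eq_single (⟨0, hq⟩ : Fin q)]
      · simp
      · intro b _ hb
        have : (b : ℕ) ≠ 0 := fun h0 => hb (Fin.ext h0)
        simp [this]
      · simp
    rw [hD, Matrix.det_mul, Matrix.det_mul, hv₁d, hv₂d, hcM_def, Matrix.det_mul, hh,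
      cosMat, Matrix.det_diagonal]
    ring
  refine ⟨⟨Tuple.sort hA.eigenvalues, fun j => congrFun hkey j⟩, ?_, hdet, ?_⟩
  · intro j
    show Real.sqrt ((hA.eigenvalues ∘ Tuple.sort hA.eigenvalues) j) = Real.cos (t j)
    rw [hkey]
    exact Real.sqrt_sq (hcos0 j)
  · intro h0
    have hpos : ∀ j, 0 < Real.cos (t j) := by
      intro j
      have hle : (⟨0, hq⟩ : Fin q) ≤ j := by simp [Fin.le_def]
      have : t j < Real.pi / 2 := lt_of_le_of_lt (ht.2 _ j hle) h0
      exact Real.cos_pos_of_mem_Ioo ⟨by linarith [(ht.1 j).1, Real.pi_pos], this⟩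
    have hppos : 0 < ∏ j, Real.cos (t j) :=
      Finset.prod_pos fun j _ => hpos j
    have hcast : (∏ j, (Real.cos (t j) : ℂ)) = ((∏ j, Real.cos (t j) : ℝ) : ℂ) := by
      push_cast; rfl
    rw [hdet, hcast, norm_mul, hz, one_mul, Complex.norm_real,
      Real.norm_of_nonneg hppos.le, mul_div_assoc, div_self (by exact_mod_cast hppos.ne'), mul_one]


end
end

section
/- Distinctness of double coset representatives: Let t, t' ∈ A_q and z, z' ∈ 𝕋, and suppose there exist k_1, k_2 ∈ K_1 with b_{t,z} = k_1 · b_{t',z'} · k_2. Then t = t', and if moreover t_1 < π/2 then z = z'. Consequently the map [cos t, z] ↦ K_1 b_{t,z} K_1 from X_q to the double coset space is injective. -/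
noncomputable section
open Matrix

/-- the subgroup `K₁ = SU(p) × SU(q)`, as a set of block diagonal matrices. -/
def K1set (m q : ℕ) : Set (Matrix (bidx m q) (bidx m q) ℂ) :=
  {k | ∃ u ∈ Matrix.specialUnitaryGroup (Fin m ⊕ Fin q) ℂ,
        ∃ v ∈ Matrix.specialUnitaryGroup (Fin q) ℂ, k = Matrix.fromBlocks u 0 0 v}

/-- the point `[r, z] = (z r₁, r₂, …, r_q)` of the cone `X_q`, realized in
`ℂ × ℝ^q`; two points `[r,z]`, `[r,z']` coincide iff `r₁ = 0` or `z = z'`. -/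
def XqPt (q : ℕ) (hq : 1 ≤ q) (r : Fin q → ℝ) (z : ℂ) : ℂ × (Fin q → ℝ) :=
  (z * (r ⟨0, hq⟩ : ℝ), r)

open Polynomial in
/-- Unitarily (or just similarly) conjugate diagonal matrices have permuted diagonals. -/
lemma perm_of_diagonal_conj {q : ℕ} (f g : Fin q → ℂ) (v : Matrix (Fin q) (Fin q) ℂ)
    (hv : IsUnit v.det) (h : Matrix.diagonal f = v * Matrix.diagonal g * v⁻¹) :
    (List.ofFn f).Perm (List.ofFn g) := by
  have hvu : IsUnit v := (Matrix.isUnit_iff_isUnit_det v).mpr hv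
  have key : ∀ x : ℂ, ∏ j, (x - f j) = ∏ j, (x - g j) := by
    intro x
    have e : ∀ u : Fin q → ℂ, x • (1 : Matrix (Fin q) (Fin q) ℂ) - Matrix.diagonal u
        = Matrix.diagonal (fun j => x - u j) := by
      intro u
      ext i j
      by_cases hij : i = j <;> simp [Matrix.diagonal_apply, Matrix.one_apply, hij]
    have h1 : v * (x • (1 : Matrix (Fin q) (Fin q) ℂ)) * v⁻¹ = x • 1 := by
      rw [Matrix.mul_smul, Matrix.smul_mul, Matrix.mul_one, Matrix.mul_nonsing_inv _ hv]
    have h2 : x • (1 : Matrix (Fin q) (Fin q) ℂ) - Matrix.diagonal f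
        = v * (x • (1 : Matrix (Fin q) (Fin q) ℂ) - Matrix.diagonal g) * v⁻¹ := by
      rw [h, Matrix.mul_sub, Matrix.sub_mul, h1]
    calc ∏ j, (x - f j) = (Matrix.diagonal fun j => x - f j).det := (Matrix.det_diagonal).symm
      _ = (Matrix.diagonal fun j => x - g j).det := by
          rw [← e, ← e, h2, Matrix.det_conj hvu]
      _ = ∏ j, (x - g j) := Matrix.det_diagonal
  have hpoly : (∏ j, (X - C (f j)) : ℂ[X]) = ∏ j, (X - C (g j)) := by
    apply Polynomial.funext
    intro x
    simpa [Polynomial.eval_prod] using key x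
  have hprod : ∀ u : Fin q → ℂ,
      (((List.ofFn u : Multiset ℂ)).map fun a => X - C a).prod = ∏ j, (X - C (u j)) := by
    intro u
    rw [Multiset.map_coe, List.map_ofFn, Multiset.prod_coe, List.prod_ofFn]
    rfl
  have hms : (List.ofFn f : Multiset ℂ) = (List.ofFn g : Multiset ℂ) := by
    rw [← Polynomial.roots_multiset_prod_X_sub_C (List.ofFn f : Multiset ℂ),
      ← Polynomial.roots_multiset_prod_X_sub_C (List.ofFn g : Multiset ℂ), hprod, hprod, hpoly]
  exact Multiset.coe_eq_coe.mp hms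

lemma eq_of_monotone_perm {q : ℕ} {f g : Fin q → ℝ} (hf : Monotone f) (hg : Monotone g)
    (h : (List.ofFn f).Perm (List.ofFn g)) : f = g := by
  apply List.ofFn_injective
  exact List.Perm.eq_of_pairwise' (r := (· ≤ ·))
    (List.pairwise_ofFn.mpr fun i j hij => hf hij.le)
    (List.pairwise_ofFn.mpr fun i j hij => hg hij.le) h

lemma hMat_cosMat_mul_star (q : ℕ) (w : ℂ) (hw : ‖w‖ = 1) (s : Fin q → ℝ) :
    (hMat q w * cosMat q s) * star (hMat q w * cosMat q s)
      = Matrix.diagonal (fun j => ((Real.cos (s j) ^ 2 : ℝ) : ℂ)) := by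
  have hw1 : w * (starRingEnd ℂ) w = 1 := by
    rw [Complex.mul_conj, Complex.normSq_eq_norm_sq, hw]; norm_num
  unfold hMat cosMat
  rw [Matrix.diagonal_mul_diagonal, Matrix.star_eq_conjTranspose, Matrix.diagonal_conjTranspose,
    Matrix.diagonal_mul_diagonal]
  refine congrArg Matrix.diagonal (funext fun j => ?_)
  simp only [Pi.star_apply, star_mul']
  by_cases hj : (j : ℕ) = 0
  · simp only [if_pos hj, Complex.star_def, Complex.conj_ofReal]
    push_cast
    linear_combination (Complex.cos ((s j : ℝ) : ℂ))^2 * hw1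
  · simp only [if_neg hj, Complex.star_def, Complex.conj_ofReal]
    push_cast
    simp [sq]

lemma det_hMat_cosMat (q : ℕ) (hq : 1 ≤ q) (w : ℂ) (s : Fin q → ℝ) :
    (hMat q w * cosMat q s).det = w * ∏ j, (Real.cos (s j) : ℂ) := by
  rw [Matrix.det_mul]
  unfold hMat cosMat
  rw [Matrix.det_diagonal, Matrix.det_diagonal]
  congr 1
  rw [Finset.prod_eq_single (⟨0, hq⟩ : Fin q)]
  · simp
  · intro b _ hb
    simp only [if_neg (fun hb0 => hb (by ext; simpa using hb0))]
  · simp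

/-- **Distinctness of double coset representatives.** If `b_{t,z}` and `b_{t',z'}`
lie in the same `K₁`-double coset, then `t = t'`, and if moreover `t₁ < π/2` then
`z = z'`; consequently the corresponding points `[cos t, z]` and `[cos t', z']`
of `X_q` coincide, i.e. the map `[cos t, z] ↦ K₁ b_{t,z} K₁` is injective. -/
theorem doubleCoset_representatives_distinct (m q : ℕ) (hm : 1 ≤ m) (hq : 1 ≤ q)
    (t t' : Fin q → ℝ) (ht : t ∈ Aq q) (ht' : t' ∈ Aq q)
    (z z' : ℂ) (hz : ‖z‖ = 1) (hz' : ‖z'‖ = 1)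
    (h : ∃ k₁ ∈ K1set m q, ∃ k₂ ∈ K1set m q,
          bMat m q t z = k₁ * bMat m q t' z' * k₂) :
    t = t' ∧ (t ⟨0, hq⟩ < Real.pi / 2 → z = z') ∧
      XqPt q hq (fun j => Real.cos (t j)) z = XqPt q hq (fun j => Real.cos (t' j)) z' := by
  obtain ⟨k₁, ⟨u₁, hu₁, v₁, hv₁, rfl⟩, k₂, ⟨u₂, hu₂, v₂, hv₂, rfl⟩, heq⟩ := h
  obtain ⟨hv₁u, hv₁det⟩ := Matrix.mem_specialUnitaryGroup_iff.mp hv₁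
  obtain ⟨hv₂u, hv₂det⟩ := Matrix.mem_specialUnitaryGroup_iff.mp hv₂
  have hv₁s : v₁ * star v₁ = 1 := Matrix.mem_unitaryGroup_iff.mp hv₁u
  have hv₂s : v₂ * star v₂ = 1 := Matrix.mem_unitaryGroup_iff.mp hv₂u
  have hv₁inv : v₁⁻¹ = star v₁ := Matrix.inv_eq_right_inv hv₁s
  -- the (2,2) block of the double coset relation
  have hD : hMat q z * cosMat q t = v₁ * (hMat q z' * cosMat q t') * v₂ := by
    have h2 := congrArg Matrix.toBlocks₂₂ heq
    simpa [bMat, Matrix.fromBlocks_multiply, Matrix.mul_assoc] using h2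
  -- diagonal matrices of squared cosines are conjugate
  have hconj : Matrix.diagonal (fun j => ((Real.cos (t j) ^ 2 : ℝ) : ℂ))
      = v₁ * Matrix.diagonal (fun j => ((Real.cos (t' j) ^ 2 : ℝ) : ℂ)) * v₁⁻¹ := by
    rw [← hMat_cosMat_mul_star q z hz t, ← hMat_cosMat_mul_star q z' hz' t', hD, hv₁inv,
      StarMul.star_mul, StarMul.star_mul]
    calc v₁ * (hMat q z' * cosMat q t') * v₂
          * (star v₂ * (star (hMat q z' * cosMat q t') * star v₁))
        = v₁ * (hMat q z' * cosMat q t') * (v₂ * star v₂)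
          * (star (hMat q z' * cosMat q t') * star v₁) := by noncomm_ring
      _ = v₁ * (hMat q z' * cosMat q t' * star (hMat q z' * cosMat q t')) * star v₁ := by
          rw [hv₂s, Matrix.mul_one]; noncomm_ring
  -- permutation of squared cosines
  have hperm := perm_of_diagonal_conj _ _ v₁ (by rw [hv₁det]; exact isUnit_one) hconj
  have hpermR : (List.ofFn fun j => Real.cos (t j) ^ 2).Perm
      (List.ofFn fun j => Real.cos (t' j) ^ 2) := by
    rw [← Multiset.coe_eq_coe] at hperm ⊢
    apply Multiset.map_injective (f := (Complex.ofReal : ℝ → ℂ)) Complex.ofReal_injective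
    rw [Multiset.map_coe, Multiset.map_coe, List.map_ofFn, List.map_ofFn]
    simpa only [Function.comp_def] using hperm
  -- monotonicity of squared cosines on the alcove
  have hmono : ∀ s : Fin q → ℝ, s ∈ Aq q → Monotone fun j => Real.cos (s j) ^ 2 := by
    rintro s ⟨h1, h2⟩ i j hij
    have h3 : s j ≤ s i := h2 i j hij
    have hci : 0 ≤ Real.cos (s i) := Real.cos_nonneg_of_mem_Icc
      ⟨by linarith [(h1 i).1, Real.pi_pos], (h1 i).2⟩
    have hcc : Real.cos (s i) ≤ Real.cos (s j) :=
      Real.cos_le_cos_of_nonneg_of_le_pi (h1 j).1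
        (le_trans (h1 i).2 (by linarith [Real.pi_pos])) h3
    exact pow_le_pow_left₀ hci hcc 2
  have hsq : (fun j => Real.cos (t j) ^ 2) = fun j => Real.cos (t' j) ^ 2 :=
    eq_of_monotone_perm (hmono t ht) (hmono t' ht') hpermR
  have hcosnn : ∀ (s : Fin q → ℝ), s ∈ Aq q → ∀ j, 0 ≤ Real.cos (s j) := by
    rintro s ⟨h1, _⟩ j
    exact Real.cos_nonneg_of_mem_Icc ⟨by linarith [(h1 j).1, Real.pi_pos], (h1 j).2⟩
  have hcos : ∀ j, Real.cos (t j) = Real.cos (t' j) := by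
    intro j
    have h2 := congrFun hsq j
    calc Real.cos (t j) = Real.sqrt (Real.cos (t j) ^ 2) := (Real.sqrt_sq (hcosnn t ht j)).symm
      _ = Real.sqrt (Real.cos (t' j) ^ 2) := by rw [h2]
      _ = Real.cos (t' j) := Real.sqrt_sq (hcosnn t' ht' j)
  have htt' : t = t' := by
    funext j
    refine Real.injOn_cos ?_ ?_ (hcos j)
    · exact ⟨(ht.1 j).1, le_trans (ht.1 j).2 (by linarith [Real.pi_pos])⟩
    · exact ⟨(ht'.1 j).1, le_trans (ht'.1 j).2 (by linarith [Real.pi_pos])⟩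
  subst htt'
  -- determinants give the z-relation
  have hdet : z * ∏ j, (Real.cos (t j) : ℂ) = z' * ∏ j, (Real.cos (t j) : ℂ) := by
    have h1 := congrArg Matrix.det hD
    rw [show (v₁ * (hMat q z' * cosMat q t) * v₂).det
        = v₁.det * (hMat q z' * cosMat q t).det * v₂.det by
      rw [Matrix.det_mul, Matrix.det_mul]] at h1
    rw [det_hMat_cosMat q hq, det_hMat_cosMat q hq, hv₁det, hv₂det, one_mul, mul_one] at h1
    exact h1
  have hzz' : t ⟨0, hq⟩ < Real.pi / 2 → z = z' := by
    intro h0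
    have hne : (∏ j, (Real.cos (t j) : ℂ)) ≠ 0 := by
      apply Finset.prod_ne_zero_iff.mpr
      intro j _
      have hle : t j ≤ t ⟨0, hq⟩ := ht.2 ⟨0, hq⟩ j (by simp [Fin.le_def])
      have hpos : 0 < Real.cos (t j) := Real.cos_pos_of_mem_Ioo
        ⟨by linarith [(ht.1 j).1, Real.pi_pos], lt_of_le_of_lt hle h0⟩
      exact_mod_cast hpos.ne'
    exact mul_right_cancel₀ hne hdet
  refine ⟨rfl, hzz', ?_⟩
  unfold XqPt
  refine Prod.ext ?_ rfl
  show z * (Real.cos (t ⟨0, hq⟩) : ℂ) = z' * (Real.cos (t ⟨0, hq⟩) : ℂ)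
  rcases eq_or_lt_of_le (ht.1 ⟨0, hq⟩).2 with h0 | h0
  · rw [h0, Real.cos_pi_div_two]
    simp
  · rw [hzz' h0]

end
end

section
/- Phase factorization of χ_l-coinvariant functions: Let p > q ≥ 1 be integers and l ∈ ℤ. Let G = SU(p+q), K := {diag(u,v) : u ∈ U(p), v ∈ U(q), det u · det v = 1}, and χ : K → 𝕋, χ(diag(u,v)) := det u. Suppose φ : G → ℂ satisfies φ(k_1 g k_2) = χ(k_1)^{−l}·χ(k_2)^{−l}·φ(g) for all k_1, k_2 ∈ K and g ∈ G. Then for all t ∈ A_q and z ∈ 𝕋: φ(b_{t,z}) = z^l · φ(a_t). -/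
noncomputable section
open Matrix

/-- the subgroup `K = S(U(p) × U(q)) = {diag(u,v) : det u · det v = 1}`. -/
def Kset (m q : ℕ) : Set (Matrix (bidx m q) (bidx m q) ℂ) :=
  {k | ∃ u ∈ Matrix.unitaryGroup (Fin m ⊕ Fin q) ℂ,
        ∃ v ∈ Matrix.unitaryGroup (Fin q) ℂ,
          u.det * v.det = 1 ∧ k = Matrix.fromBlocks u 0 0 v}

/-- `χ(diag(u,v)) = det u`, expressed as the determinant of the upper-left
`p×p` block. -/
def chiK (m q : ℕ) (k : Matrix (bidx m q) (bidx m q) ℂ) : ℂ :=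
  (Matrix.of fun i j : Fin m ⊕ Fin q => k (Sum.inl i) (Sum.inl j)).det

/-! ### Auxiliary material -/

/-- reindexing `bidx m q ≃ Fin m ⊕ (Fin 2 × Fin q)`. -/
def myE (m q : ℕ) : bidx m q ≃ (Fin m ⊕ Fin 2 × Fin q) where
  toFun x := match x with
    | .inl (.inl i) => .inl i
    | .inl (.inr j) => .inr (0, j)
    | .inr j => .inr (1, j)
  invFun y := match y with
    | .inl i => .inl (.inl i)
    | .inr (i, j) => if i = 0 then .inl (.inr j) else .inr j
  left_inv := by rintro ((i | j) | j) <;> simp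
  right_inv := by
    rintro (i | ⟨i, j⟩)
    · rfl
    · fin_cases i <;> simp

/-- the 2×2 rotation block -/
def rotB {q : ℕ} (t : Fin q → ℝ) (j : Fin q) : Matrix (Fin 2) (Fin 2) ℂ :=
  !![(Real.cos (t j) : ℂ), -(Real.sin (t j) : ℂ);
     (Real.sin (t j) : ℂ), (Real.cos (t j) : ℂ)]

lemma rot_unitary {q : ℕ} (t : Fin q → ℝ) (j : Fin q) : (rotB t j)ᴴ * rotB t j = 1 := by
  have h : (Real.cos (t j)) ^ 2 + (Real.sin (t j)) ^ 2 = 1 := Real.cos_sq_add_sin_sq _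
  have hC : (Real.cos (t j) : ℂ) * (Real.cos (t j) : ℂ)
      + (Real.sin (t j) : ℂ) * (Real.sin (t j) : ℂ) = 1 := by
    norm_cast
    nlinarith [h]
  ext i k
  fin_cases i <;> fin_cases k <;>
    simp [rotB, Matrix.mul_apply, Fin.sum_univ_two, Matrix.one_apply,
      ← Complex.ofReal_cos, ← Complex.ofReal_sin, Complex.conj_ofReal] <;>
  first | ring1 | linear_combination hC

lemma bMat_one_eq (m q : ℕ) (t : Fin q → ℝ) :
    bMat m q t 1 =
      (Matrix.fromBlocks 1 0 0 (Matrix.blockDiagonal fun j => rotB t j)).submatrix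
        (myE m q) (myE m q) := by
  ext i j
  rcases i with (i | i) | i <;> rcases j with (j | j) | j <;>
    simp [bMat, myE, hMat, cosMat, sinMat, rotB, Matrix.blockDiagonal_apply,
      Matrix.diagonal_apply, Matrix.one_apply, Matrix.diagonal_mul_diagonal]

lemma a_mem_SU (m q : ℕ) (t : Fin q → ℝ) :
    bMat m q t 1 ∈ Matrix.specialUnitaryGroup (bidx m q) ℂ := by
  rw [Matrix.mem_specialUnitaryGroup_iff]
  constructor
  · rw [Matrix.mem_unitaryGroup_iff', bMat_one_eq, Matrix.star_eq_conjTranspose,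
      Matrix.conjTranspose_submatrix, Matrix.submatrix_mul_equiv]
    have h1 : (Matrix.fromBlocks (1 : Matrix (Fin m) (Fin m) ℂ) 0 0
        (Matrix.blockDiagonal fun j => rotB t j))ᴴ *
        (Matrix.fromBlocks 1 0 0 (Matrix.blockDiagonal fun j => rotB t j)) = 1 := by
      rw [Matrix.fromBlocks_conjTranspose, Matrix.fromBlocks_multiply,
        Matrix.blockDiagonal_conjTranspose, ← Matrix.blockDiagonal_mul]
      have : (Matrix.blockDiagonal fun j => (rotB t j)ᴴ * rotB t j) = 1 := by
        simp only [rot_unitary]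
        exact Matrix.blockDiagonal_one
      simp [this, ← Matrix.fromBlocks_one]
    rw [h1, Matrix.submatrix_one_equiv]
  · rw [bMat_one_eq, Matrix.det_submatrix_equiv_self, Matrix.det_fromBlocks_zero₂₁,
      Matrix.det_one, one_mul, Matrix.det_blockDiagonal]
    refine Finset.prod_eq_one fun j _ => ?_
    have h : (Real.cos (t j)) ^ 2 + (Real.sin (t j)) ^ 2 = 1 := Real.cos_sq_add_sin_sq _
    have hC : (Real.cos (t j) : ℂ) * (Real.cos (t j) : ℂ)
        + (Real.sin (t j) : ℂ) * (Real.sin (t j) : ℂ) = 1 := by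
      norm_cast
      nlinarith [h]
    rw [rotB, Matrix.det_fin_two_of]
    linear_combination hC

lemma diag_unitary {n : Type*} [Fintype n] [DecidableEq n] (d : n → ℂ)
    (h : ∀ i, ‖d i‖ = 1) : Matrix.diagonal d ∈ Matrix.unitaryGroup n ℂ := by
  rw [Matrix.mem_unitaryGroup_iff, Matrix.star_eq_conjTranspose,
    Matrix.diagonal_conjTranspose, Matrix.diagonal_mul_diagonal]
  have hd : ∀ i, d i * star (d i) = 1 := by
    intro i
    simp only [Complex.star_def, Complex.mul_conj]
    rw [Complex.normSq_eq_norm_sq, h i]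
    norm_num
  simp only [Pi.star_apply, hd]
  exact Matrix.diagonal_one

lemma prod_ite_zero {n : ℕ} (hn : 1 ≤ n) (w : ℂ) :
    (∏ i : Fin n, if (i : ℕ) = 0 then w else 1) = w := by
  haveI : NeZero n := ⟨by omega⟩
  rw [Finset.prod_eq_single (0 : Fin n)]
  · simp
  · intro b _ hb
    rw [if_neg]
    intro hb0
    exact hb (Fin.ext (by simpa using hb0))
  · simp

lemma chiK_diagonal (m q : ℕ) (d : bidx m q → ℂ) :
    chiK m q (Matrix.diagonal d) = ∏ i : Fin m ⊕ Fin q, d (Sum.inl i) := by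
  unfold chiK
  have h : (Matrix.of fun i j : Fin m ⊕ Fin q => Matrix.diagonal d (Sum.inl i) (Sum.inl j))
      = Matrix.diagonal (fun i => d (Sum.inl i)) := by
    ext i j
    by_cases h : i = j <;> simp [Matrix.diagonal_apply, h]
  rw [h, Matrix.det_diagonal]

lemma diag_mem_Kset (m q : ℕ) (f : Fin m ⊕ Fin q → ℂ) (g : Fin q → ℂ)
    (hf : ∀ i, ‖f i‖ = 1) (hg : ∀ j, ‖g j‖ = 1)
    (hdet : (∏ i, f i) * (∏ j, g j) = 1) :
    Matrix.diagonal (Sum.elim f g) ∈ Kset m q := by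
  refine ⟨Matrix.diagonal f, diag_unitary f hf, Matrix.diagonal g, diag_unitary g hg, ?_, ?_⟩
  · rw [Matrix.det_diagonal, Matrix.det_diagonal]
    exact hdet
  · rw [Matrix.fromBlocks_diagonal]

/-- **Phase factorization of `χ_l`-coinvariant functions.** If
`φ(k₁ g k₂) = χ(k₁)^{−l} χ(k₂)^{−l} φ(g)` for all `k₁, k₂ ∈ K` and `g ∈ SU(p+q)`,
then `φ(b_{t,z}) = z^l · φ(a_t)` for all `t ∈ A_q`, `z ∈ 𝕋`, where `a_t = b_{t,1}`. -/
theorem coinvariant_phase_factorization (m q : ℕ) (hm : 1 ≤ m) (hq : 1 ≤ q) (l : ℤ)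
    (φ : Matrix (bidx m q) (bidx m q) ℂ → ℂ)
    (hφ : ∀ k₁ ∈ Kset m q, ∀ k₂ ∈ Kset m q,
      ∀ g ∈ Matrix.specialUnitaryGroup (bidx m q) ℂ,
        φ (k₁ * g * k₂) = (chiK m q k₁) ^ (-l) * (chiK m q k₂) ^ (-l) * φ g)
    (t : Fin q → ℝ) (ht : t ∈ Aq q) (z : ℂ) (hz : ‖z‖ = 1) :
    φ (bMat m q t z) = z ^ l * φ (bMat m q t 1) := by
  classical
  have hz0 : z ≠ 0 := by
    intro h
    rw [h] at hz
    simp at hz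
  have hzinvabs : ‖z⁻¹‖ = 1 := by
    rw [norm_inv, hz]
    norm_num
  set f₁ : Fin m ⊕ Fin q → ℂ :=
    Sum.elim (fun i => if (i : ℕ) = 0 then z⁻¹ else 1) (fun _ => (1 : ℂ)) with hf₁
  set g₁ : Fin q → ℂ := fun j => if (j : ℕ) = 0 then z else 1 with hg₁
  set f₂ : Fin m ⊕ Fin q → ℂ :=
    Sum.elim (fun i => if (i : ℕ) = 0 then z else 1)
      (fun j => if (j : ℕ) = 0 then z⁻¹ else 1) with hf₂
  set g₂ : Fin q → ℂ := fun _ => (1 : ℂ) with hg₂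
  have habs1 : ∀ i, ‖f₁ i‖ = 1 := by
    rintro (i | j)
    · by_cases h : (i : ℕ) = 0 <;> simp [hf₁, h, hzinvabs]
    · simp [hf₁, hg₂]
  have habsg1 : ∀ j, ‖g₁ j‖ = 1 := by
    intro j
    by_cases h : (j : ℕ) = 0 <;> simp [hg₁, h, hz]
  have habs2 : ∀ i, ‖f₂ i‖ = 1 := by
    rintro (i | j)
    · by_cases h : (i : ℕ) = 0 <;> simp [hf₂, h, hz]
    · by_cases h : (j : ℕ) = 0 <;> simp [hf₂, h, hzinvabs]
  have habsg2 : ∀ j, ‖g₂ j‖ = 1 := by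
    intro j
    simp [hg₂]
  have hpf₁ : (∏ i, f₁ i) = z⁻¹ := by
    rw [Fintype.prod_sum_type]
    simp [hf₁, hg₂, prod_ite_zero hm z⁻¹]
  have hpg₁ : (∏ j, g₁ j) = z := by
    simpa [hg₁] using prod_ite_zero hq z
  have hpf₂ : (∏ i, f₂ i) = 1 := by
    rw [Fintype.prod_sum_type]
    have h1 : (∏ i : Fin m, f₂ (Sum.inl i)) = z := by
      simpa [hf₂] using prod_ite_zero hm z
    have h2 : (∏ j : Fin q, f₂ (Sum.inr j)) = z⁻¹ := by
      simpa [hf₂] using prod_ite_zero hq z⁻¹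
    rw [h1, h2, mul_inv_cancel₀ hz0]
  have hpg₂ : (∏ j, g₂ j) = 1 := by
    simp [hg₂]
  have mem₁ : Matrix.diagonal (Sum.elim f₁ g₁) ∈ Kset m q := by
    refine diag_mem_Kset m q f₁ g₁ habs1 habsg1 ?_
    rw [hpf₁, hpg₁, inv_mul_cancel₀ hz0]
  have mem₂ : Matrix.diagonal (Sum.elim f₂ g₂) ∈ Kset m q := by
    refine diag_mem_Kset m q f₂ g₂ habs2 habsg2 ?_
    rw [hpf₂, hpg₂, one_mul]
  have hb : bMat m q t z =
      Matrix.diagonal (Sum.elim f₁ g₁) * bMat m q t 1 * Matrix.diagonal (Sum.elim f₂ g₂) := by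
    ext i j
    rw [Matrix.mul_diagonal, Matrix.diagonal_mul]
    rcases i with (i | i) | i <;> rcases j with (j | j) | j <;>
      simp only [bMat, Matrix.fromBlocks_apply₁₁, Matrix.fromBlocks_apply₁₂,
        Matrix.fromBlocks_apply₂₁, Matrix.fromBlocks_apply₂₂,
        Matrix.fromRows_apply_inl, Matrix.fromRows_apply_inr,
        Matrix.fromCols_apply_inl, Matrix.fromCols_apply_inr,
        Sum.elim_inl, Sum.elim_inr, hf₁, hf₂, hg₁, hg₂, hMat, cosMat, sinMat,
        Matrix.diagonal_mul_diagonal, Matrix.diagonal_apply, Matrix.one_apply,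
        Matrix.neg_apply, Matrix.zero_apply, inv_one, ite_self,
        mul_zero, zero_mul, mul_one, one_mul, neg_zero] <;>
    first
      | rfl
      | (rcases eq_or_ne i j with rfl | hij
         · split_ifs <;> field_simp <;> simp
         · simp [hij])
  have key := hφ _ mem₁ _ mem₂ _ (a_mem_SU m q t)
  rw [← hb] at key
  rw [key, chiK_diagonal, chiK_diagonal]
  have e₁ : (∏ i : Fin m ⊕ Fin q, Sum.elim f₁ g₁ (Sum.inl i)) = z⁻¹ := by
    simpa using hpf₁
  have e₂ : (∏ i : Fin m ⊕ Fin q, Sum.elim f₂ g₂ (Sum.inl i)) = 1 := by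
    simpa using hpf₂
  rw [e₁, e₂, _root_.one_zpow, mul_one, _root_.zpow_neg, _root_.inv_zpow, inv_inv]

end
end
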